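/- Let R be a commutative ring and let A = [[a,b],[b,c]] ∈ M₂(R) be a symmetric unimodular matrix with det A = 0 (i.e., a·c = b²). (1) If there exists (e,f) ∈ R² such that a·e² − c·f² is a unit of R, then A is simply extendable. (2) Conversely, if R has characteristic 2 and A is simply extendable, then there exists (e,f) ∈ R² such that a·e² − c·f² is a unit of R. -/

import Mathlib

/-- A 2×2 matrix over a commutative ring is *unimodular* if the ideal generated by
its entries is the whole ring, i.e. some linear combination of its entries is 1. -/
def MatUnimodular {R : Type*} [CommRing R] (A : Matrix (Fin 2) (Fin 2) R) : Prop :=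
  ∃ p q r s : R, p * A 0 0 + q * A 0 1 + r * A 1 0 + s * A 1 1 = 1

/-- A 2×2 matrix `A` is *extendable* if there is a 3×3 matrix of determinant 1 whose
upper-left 2×2 block is `A`. -/
def Extendable {R : Type*} [CommRing R] (A : Matrix (Fin 2) (Fin 2) R) : Prop :=
  ∃ B : Matrix (Fin 3) (Fin 3) R, B.det = 1 ∧
    ∀ i j : Fin 2, B i.castSucc j.castSucc = A i j

/-- A 2×2 matrix `A` is *simply extendable* if there is a 3×3 matrix of determinant 1
whose upper-left 2×2 block is `A` and whose (3,3) entry is 0. -/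
def SimplyExtendable {R : Type*} [CommRing R] (A : Matrix (Fin 2) (Fin 2) R) : Prop :=
  ∃ B : Matrix (Fin 3) (Fin 3) R, B.det = 1 ∧
    (∀ i j : Fin 2, B i.castSucc j.castSucc = A i j) ∧ B 2 2 = 0

/-- A 2×2 matrix is *non-full* if it is a product of a 2×1 matrix and a 1×2 matrix. -/
def NonFull {R : Type*} [CommRing R] (A : Matrix (Fin 2) (Fin 2) R) : Prop :=
  ∃ l m n q : R, A 0 0 = l * n ∧ A 0 1 = l * q ∧ A 1 0 = m * n ∧ A 1 1 = m * q

/-- Pell-type criterion for a symmetric unimodular 2×2 matrix `[[a,b],[b,c]]` of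
determinant 0: existence of `(e,f)` with `a*e² - c*f²` a unit implies simple
extendability, and the converse holds in characteristic 2. -/
theorem symmetric_pell_criterion (R : Type*) [CommRing R] (a b c : R)
    (hA : MatUnimodular (Matrix.of ![![a, b], ![b, c]])) (hdet : a * c = b * b) :
    ((∃ e f : R, IsUnit (a * e ^ 2 - c * f ^ 2)) →
      SimplyExtendable (Matrix.of ![![a, b], ![b, c]])) ∧
    (CharP R 2 → SimplyExtendable (Matrix.of ![![a, b], ![b, c]]) →
      ∃ e f : R, IsUnit (a * e ^ 2 - c * f ^ 2)) := by
  obtain ⟨p, q, r, s, h1⟩ := hA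
  simp only [Matrix.of_apply, Matrix.cons_val', Matrix.cons_val_zero, Matrix.cons_val_one,
    Matrix.head_cons, Matrix.empty_val', Matrix.cons_val_fin_one, Matrix.head_fin_const] at h1
  constructor
  · rintro ⟨e, f, hu⟩
    obtain ⟨v, hvv⟩ := hu.exists_right_inv
    refine ⟨Matrix.of ![![a, b, v * s * (b * e + c * f)],
      ![b, c, -(v * (p * (b * f + a * e) + (q + r) * (b * e + c * f)))],
      ![f, e, 0]], ?_, ?_, rfl⟩
    · simp only [Matrix.det_fin_three, Matrix.of_apply, Matrix.cons_val', Matrix.cons_val_zero,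
        Matrix.cons_val_one, Matrix.cons_val_two, Matrix.head_cons, Matrix.tail_cons,
        Matrix.empty_val', Matrix.cons_val_fin_one, Matrix.head_fin_const]
      linear_combination (v * (a * e ^ 2 - c * f ^ 2)) * h1 + hvv +
        (v * (p * f ^ 2 + (q + r) * e * f - s * e ^ 2)) * hdet
    · intro i j; fin_cases i <;> fin_cases j <;> rfl
  · rintro hchar ⟨B, hdet1, hB, hB22⟩
    have h2 : (2 : R) = 0 := by
      have := CharP.cast_eq_zero R 2
      exact_mod_cast this
    set x := B 0 2 with hx
    set y := B 1 2 with hy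
    set z := B 2 0 with hz
    set w := B 2 1 with hw
    have hB00 : B 0 0 = a := hB 0 0
    have hB01 : B 0 1 = b := hB 0 1
    have hB10 : B 1 0 = b := hB 1 0
    have hB11 : B 1 1 = c := hB 1 1
    rw [Matrix.det_fin_three] at hdet1
    rw [hB00, hB01, hB10, hB11, hB22, ← hx, ← hy, ← hz, ← hw] at hdet1
    refine ⟨w, z, IsUnit.of_mul_eq_one (a * y ^ 2 + c * x ^ 2) ?_⟩
    have D : (-(a * y * w) + b * y * z + x * b * w - x * c * z) = 1 := by
      linear_combination hdet1
    linear_combination ((-(a * y * w) + b * y * z + x * b * w - x * c * z) + 1) * D +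
      (x ^ 2 * w ^ 2 - y ^ 2 * z ^ 2) * hdet +
      (-(b ^ 2 * y ^ 2 * z ^ 2 + c ^ 2 * x ^ 2 * z ^ 2 - a * b * y ^ 2 * z * w -
        a * b * x * y * w ^ 2 + a * c * x * y * z * w + b ^ 2 * x * y * z * w -
        b * c * x * y * z ^ 2 - b * c * x ^ 2 * z * w)) * h2
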